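/- Let G=(V,E) be an undirected unweighted graph, p* an s–t path in G with edge sequence e1,…,eℓ, and let Ĝ be the augmented line graph of G with respect to s and t, with target path p̂* = (ŝ, e1, …, eℓ, t̂). Then the minimum size of a Force Path Remove solution for (Ĝ, p̂*) equals the minimum size of a Force Path Cut solution for (G, p*) (assuming a Force Path Cut solution exists); in particular, if V̂' is a minimum-size Force Path Remove solution for (Ĝ, p̂*), then V̂' viewed as an edge set is a minimum-size Force Path Cut solution for (G, p*). -/

import Mathlib

/-- `E'` is a Force Path Cut solution for the undirected graph `G` with unit edge
weights and target path `p`. -/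
def FPCSol {V : Type*} (G : SimpleGraph V) {s t : V} (p : G.Walk s t)
    (E' : Set (Sym2 V)) : Prop :=
  E' ⊆ G.edgeSet ∧ (∀ e ∈ p.edges, e ∉ E') ∧
    ∀ q : (G.deleteEdges E').Walk s t, q.IsPath →
      q.mapLe (SimpleGraph.deleteEdges_le E') ≠ p → p.length < q.length

/-- `V'` is a Force Path Remove solution for the unweighted graph `H` and target path
`p`: `V'` avoids the vertices of `p`, and in the subgraph induced on the complement of
`V'` (modelled by deleting every edge incident to a vertex of `V'`) the path `p` is
strictly shorter than every other path between its endpoints. -/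
def FPRSol {X : Type*} (H : SimpleGraph X) {a b : X} (p : H.Walk a b)
    (V' : Set X) : Prop :=
  (∀ v ∈ V', v ∉ p.support) ∧
    ∀ q : (H.deleteEdges {e : Sym2 X | ∃ v ∈ V', v ∈ e}).Walk a b, q.IsPath →
      q.mapLe (SimpleGraph.deleteEdges_le _) ≠ p → p.length < q.length

/-- The adjacency relation of the augmented line graph of `G` with respect to `s` and
`t`.  Its vertices are the edges of `G` (as elements of `Sym2 V`) together with two new
vertices `ŝ = Sum.inr false` and `t̂ = Sum.inr true`; two edges of `G` are adjacent iff
they are distinct and share an endpoint, `ŝ` is adjacent to exactly the edges incident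
to `s`, and `t̂` to exactly the edges incident to `t`. -/
def lgAdj {V : Type*} (G : SimpleGraph V) (s t : V) :
    (Sym2 V ⊕ Bool) → (Sym2 V ⊕ Bool) → Prop
  | Sum.inl e, Sum.inl f => e ∈ G.edgeSet ∧ f ∈ G.edgeSet ∧ e ≠ f ∧ ∃ v, v ∈ e ∧ v ∈ f
  | Sum.inl e, Sum.inr b => e ∈ G.edgeSet ∧ (if b then t else s) ∈ e
  | Sum.inr b, Sum.inl e => e ∈ G.edgeSet ∧ (if b then t else s) ∈ e
  | Sum.inr _, Sum.inr _ => False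

/-- The augmented line graph of `G` with respect to `s` and `t`. -/
def lineGraph {V : Type*} (G : SimpleGraph V) (s t : V) :
    SimpleGraph (Sym2 V ⊕ Bool) where
  Adj := lgAdj G s t
  symm := ⟨by
    rintro (e | b) (f | b') h <;> simp only [lgAdj] at h ⊢ <;> tauto⟩
  loopless := ⟨by
    rintro (e | b) h <;> simp only [lgAdj] at h
    exact h.2.2.1 rfl⟩


namespace Stmt15Aux

open SimpleGraph

variable {V : Type*}

/-- incidence relation on edges -/
def R : Sym2 V → Sym2 V → Prop := fun e f => e ≠ f ∧ ∃ v, v ∈ e ∧ v ∈ f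

lemma mapLe_support {G G' : SimpleGraph V} (h : G ≤ G') {u v : V} (p : G.Walk u v) :
    (p.mapLe h).support = p.support := by
  have hid : ⇑(SimpleGraph.Hom.ofLE h) = id := rfl
  simp [Walk.mapLe, Walk.support_map, hid]

lemma mapLe_edges {G G' : SimpleGraph V} (h : G ≤ G') {u v : V} (p : G.Walk u v) :
    (p.mapLe h).edges = p.edges := by
  have hid : ⇑(SimpleGraph.Hom.ofLE h) = id := rfl
  simp [Walk.mapLe, Walk.edges_map, hid, Sym2.map_id']

lemma mapLe_length {G G' : SimpleGraph V} (h : G ≤ G') {u v : V} (p : G.Walk u v) :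
    (p.mapLe h).length = p.length := by
  simp [Walk.mapLe, Walk.length_map]

/-- a walk is determined by its support -/
lemma walk_eq_of_support_eq {G : SimpleGraph V} :
    ∀ {a b : V} (p q : G.Walk a b), p.support = q.support → p = q := by
  intro a b p
  induction p with
  | nil =>
    intro q hq
    cases q with
    | nil => rfl
    | cons h q' =>
      exfalso
      rw [Walk.support_nil, Walk.support_cons, q'.support_eq_cons] at hq
      simp at hq
  | cons h p' ih =>
    intro q hq
    cases q with
    | nil =>
      exfalso
      rw [Walk.support_nil, Walk.support_cons, p'.support_eq_cons] at hq
      simp at hq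
    | cons h2 q' =>
      simp only [Walk.support_cons, List.cons.injEq] at hq
      obtain ⟨-, hq⟩ := hq
      have hq2 := hq
      rw [p'.support_eq_cons, q'.support_eq_cons] at hq2
      injection hq2 with hc _
      subst hc
      rw [ih q' hq]

/-- a walk is determined by its edges -/
lemma walk_eq_of_edges_eq {G : SimpleGraph V} :
    ∀ {a b : V} (p q : G.Walk a b), p.edges = q.edges → p = q := by
  intro a b p
  induction p with
  | nil =>
    intro q hq
    cases q with
    | nil => rfl
    | cons h q' => simp [Walk.edges_cons] at hq
  | cons h p' ih =>
    intro q hq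
    cases q with
    | nil => simp [Walk.edges_cons] at hq
    | cons h2 q' =>
      simp only [Walk.edges_cons, List.cons.injEq] at hq
      obtain ⟨he, hq⟩ := hq
      rw [Sym2.congr_right] at he
      subst he
      rw [ih q' hq]

/-- Lemma A: from a chain of pairwise-incident edges, extract a walk. -/
lemma lemA (G' : SimpleGraph V) :
    ∀ (L : List (Sym2 V)) (e : Sym2 V) (v t : V),
      (∀ f ∈ e :: L, f ∈ G'.edgeSet) → List.Chain' R (e :: L) → v ∈ e →
      t ∈ (e :: L).getLast (List.cons_ne_nil _ _) →
      ∃ W : G'.Walk v t, W.length ≤ (e :: L).length ∧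
        (W.length = (e :: L).length → W.edges = e :: L) := by
  intro L
  induction L with
  | nil =>
    intro e v t hmem _ hv ht
    simp only [List.getLast_singleton] at ht
    by_cases hvt : v = t
    · subst hvt
      exact ⟨Walk.nil, by simp, by simp⟩
    · have he : e = s(v, t) := (Sym2.mem_and_mem_iff hvt).mp ⟨hv, ht⟩
      have hadj : G'.Adj v t := by
        rw [← SimpleGraph.mem_edgeSet, ← he]; exact hmem e (by simp)
      exact ⟨Walk.cons hadj Walk.nil, by simp, fun _ => by simp [← he]⟩
  | cons f L' ih =>
    intro e v t hmem hchain hv ht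
    rw [List.Chain', List.isChain_cons_cons] at hchain
    obtain ⟨⟨hef, w, hwe, hwf⟩, hchain'⟩ := hchain
    have ht' : t ∈ (f :: L').getLast (List.cons_ne_nil _ _) := by
      rwa [List.getLast_cons (List.cons_ne_nil _ _)] at ht
    obtain ⟨W', hW'len, hW'eq⟩ := ih f w t (fun g hg => hmem g (List.mem_cons_of_mem _ hg))
      hchain' hwf ht'
    by_cases hvw : v = w
    · subst hvw
      refine ⟨W', ?_, ?_⟩
      · simp only [List.length_cons] at hW'len ⊢; omega
      · intro hlen
        exfalso
        simp only [List.length_cons] at hW'len hlen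
        omega
    · have he : e = s(v, w) := (Sym2.mem_and_mem_iff hvw).mp ⟨hv, hwe⟩
      have hadj : G'.Adj v w := by
        rw [← SimpleGraph.mem_edgeSet, ← he]; exact hmem e (by simp)
      refine ⟨Walk.cons hadj W', ?_, ?_⟩
      · simp only [Walk.length_cons, List.length_cons] at hW'len ⊢; omega
      · intro hlen
        simp only [Walk.length_cons, List.length_cons] at hlen
        have : W'.length = (f :: L').length := by simp only [List.length_cons]; omega
        simp [Walk.edges_cons, hW'eq this, ← he]

/-- Lemma D: consequence of FPC for arbitrary walks. -/
lemma lemD [DecidableEq V] (G : SimpleGraph V) {s t : V} (pstar : G.Walk s t) (E' : Set (Sym2 V))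
    (hFPC : FPCSol G pstar E') (W : (G.deleteEdges E').Walk s t) :
    pstar.length ≤ W.length ∧ (W.length ≤ pstar.length → W.edges = pstar.edges) := by
  have hPpath := W.bypass_isPath
  have hPle := W.length_bypass_le
  by_cases hP : W.bypass.mapLe (SimpleGraph.deleteEdges_le E') = pstar
  · have hlenP : W.bypass.length = pstar.length := by rw [← hP, mapLe_length]
    refine ⟨by omega, fun hle => ?_⟩
    have hWP : W.length = W.bypass.length := by omega
    have hsub : W.bypass.support ⊆ W.support := W.support_bypass_subset
    have hnodup : W.bypass.support.Nodup := hPpath.support_nodup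
    have hlen : W.support.length ≤ W.bypass.support.length := by
      rw [Walk.length_support, Walk.length_support]; omega
    have hperm : List.Perm W.bypass.support W.support :=
      (List.subperm_of_subset hnodup hsub).perm_of_length_le hlen
    have hWnodup : W.support.Nodup := hperm.nodup_iff.mp hnodup
    have hWpath : W.IsPath := (Walk.isPath_def W).mpr hWnodup
    by_cases hW : W.mapLe (SimpleGraph.deleteEdges_le E') = pstar
    · rw [← hW, mapLe_edges]
    · have := hFPC.2.2 W hWpath hW
      omega
  · have hlt := hFPC.2.2 W.bypass hPpath hP
    exact ⟨by omega, fun hle => absurd hle (by omega)⟩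

lemma nodup_hat (l : List (Sym2 V)) (hl : l.Nodup) :
    (Sum.inr false :: (l.map Sum.inl ++ [Sum.inr true]) : List (Sym2 V ⊕ Bool)).Nodup := by
  rw [List.nodup_cons, List.nodup_append]
  refine ⟨?_, hl.map Sum.inl_injective, List.nodup_singleton _, ?_⟩
  · intro h
    rcases List.mem_append.mp h with h | h
    · obtain ⟨f, -, hf⟩ := List.mem_map.mp h; simp at hf
    · simp at h
  · rintro x hx y hy
    obtain ⟨f, -, rfl⟩ := List.mem_map.mp hx
    simp at hy; simp [hy]

/-- extract an edge chain from a path in the augmented line graph. -/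
lemma extract (G : SimpleGraph V) (s t : V) (Vhat' : Set (Sym2 V ⊕ Bool))
    {x y : Sym2 V ⊕ Bool}
    (W : ((_root_.lineGraph G s t).deleteEdges
        {e : Sym2 (Sym2 V ⊕ Bool) | ∃ v ∈ Vhat', v ∈ e}).Walk x y) :
    W.IsPath → Sum.inr false ∉ W.support → ∀ e : Sym2 V, x = Sum.inl e → y = Sum.inr true →
    ∃ L : List (Sym2 V),
      W.support = (e :: L).map Sum.inl ++ [Sum.inr true] ∧
      List.Chain' R (e :: L) ∧
      (∀ f ∈ e :: L, f ∈ G.edgeSet ∧ Sum.inl f ∉ Vhat') ∧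
      t ∈ (e :: L).getLast (List.cons_ne_nil _ _) := by
  induction W with
  | nil =>
    intro _ _ e hx hy
    rw [hx] at hy
    simp at hy
  | @cons u v w h W' ih =>
    intro hp hs e hx hy
    subst hx
    rw [SimpleGraph.deleteEdges_adj] at h
    obtain ⟨hadj, hnD⟩ := h
    have heV : Sum.inl e ∉ Vhat' := fun hmem => hnD ⟨Sum.inl e, hmem, Sym2.mem_mk_left _ _⟩
    have hvV : v ∉ Vhat' := fun hmem => hnD ⟨v, hmem, Sym2.mem_mk_right _ _⟩
    match v, hadj with
    | Sum.inr true, hadj =>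
      obtain ⟨heE, hte⟩ := (hadj : _root_.lgAdj G s t (Sum.inl e) (Sum.inr true))
      subst hy
      have hW'nil : W' = Walk.nil := Walk.isPath_iff_eq_nil.mp hp.of_cons
      subst hW'nil
      refine ⟨[], by simp, by simp [R, List.Chain'], ?_, by simpa using hte⟩
      intro f hf
      simp at hf
      subst hf
      exact ⟨heE, heV⟩
    | Sum.inr false, hadj =>
      exfalso
      exact hs (by rw [Walk.support_cons]; exact List.mem_cons_of_mem _ W'.start_mem_support)
    | Sum.inl f, hadj =>
      obtain ⟨heE, hfE, hef, z, hze, hzf⟩ :=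
        (hadj : _root_.lgAdj G s t (Sum.inl e) (Sum.inl f))
      have hs' : Sum.inr false ∉ W'.support := fun hm =>
        hs (by rw [Walk.support_cons]; exact List.mem_cons_of_mem _ hm)
      obtain ⟨L', hsupp, hchain, hmem, hlast⟩ := ih hp.of_cons hs' f rfl hy
      refine ⟨f :: L', ?_, ?_, ?_, ?_⟩
      · rw [Walk.support_cons, hsupp]; rfl
      · exact List.isChain_cons_cons.mpr ⟨⟨hef, z, hze, hzf⟩, hchain⟩
      · rintro g hg
        rcases List.mem_cons.mp hg with rfl | hg
        · exact ⟨heE, heV⟩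
        · exact hmem g hg
      · rwa [List.getLast_cons (List.cons_ne_nil _ _)]

/-- lift a walk in `G` minus removed edges to the augmented line graph. -/
lemma lift (G : SimpleGraph V) (s t : V) (Vhat' : Set (Sym2 V ⊕ Bool))
    (hsub : Vhat' ⊆ Sum.inl '' G.edgeSet) :
    ∀ {a b : V} (q : (G.deleteEdges {e : Sym2 V | Sum.inl e ∈ Vhat'}).Walk a b)
      (e : Sym2 V), b = t → a ∈ e → e ∈ G.edgeSet → Sum.inl e ∉ Vhat' →
      (e :: q.edges).Nodup →
      ∃ Wh : ((_root_.lineGraph G s t).deleteEdges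
          {e : Sym2 (Sym2 V ⊕ Bool) | ∃ v ∈ Vhat', v ∈ e}).Walk
          (Sum.inl e) (Sum.inr true),
        Wh.support = (e :: q.edges).map Sum.inl ++ [Sum.inr true] := by
  intro a b q
  have hinr : ∀ bb : Bool, (Sum.inr bb : Sym2 V ⊕ Bool) ∉ Vhat' := by
    intro bb hmem
    obtain ⟨f, -, hf⟩ := hsub hmem
    simp at hf
  induction q with
  | nil =>
    intro e hb hae heE heV _
    rw [hb] at hae
    have hadjL : (_root_.lineGraph G s t).Adj (Sum.inl e) (Sum.inr true) :=
      (⟨heE, hae⟩ : _root_.lgAdj G s t (Sum.inl e) (Sum.inr true))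
    have hadj : ((_root_.lineGraph G s t).deleteEdges
        {e : Sym2 (Sym2 V ⊕ Bool) | ∃ v ∈ Vhat', v ∈ e}).Adj (Sum.inl e) (Sum.inr true) := by
      rw [SimpleGraph.deleteEdges_adj]
      refine ⟨hadjL, ?_⟩
      rintro ⟨z, hz, hzmem⟩
      rcases Sym2.mem_iff.mp hzmem with rfl | rfl
      · exact heV hz
      · exact hinr true hz
    exact ⟨Walk.cons hadj Walk.nil, by simp⟩
  | @cons a c b h q' ih =>
    intro e hb hae heE heV hnd
    rw [SimpleGraph.deleteEdges_adj] at h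
    obtain ⟨hGadj, hfV⟩ := h
    have hfE : s(a, c) ∈ G.edgeSet := hGadj
    have hfV' : Sum.inl s(a, c) ∉ Vhat' := hfV
    have hef : e ≠ s(a, c) := by
      intro hcontra
      rw [Walk.edges_cons, List.nodup_cons] at hnd
      exact hnd.1 (hcontra ▸ List.mem_cons_self)
    obtain ⟨Wh', hWh'⟩ := ih s(a, c) hb (Sym2.mem_mk_right _ _) hfE hfV'
      (by rw [Walk.edges_cons, List.nodup_cons] at hnd; exact hnd.2)
    have hadjL : (_root_.lineGraph G s t).Adj (Sum.inl e) (Sum.inl s(a, c)) :=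
      (⟨heE, hfE, hef, a, hae, Sym2.mem_mk_left _ _⟩ :
        _root_.lgAdj G s t (Sum.inl e) (Sum.inl s(a, c)))
    have hadj : ((_root_.lineGraph G s t).deleteEdges
        {e : Sym2 (Sym2 V ⊕ Bool) | ∃ v ∈ Vhat', v ∈ e}).Adj
        (Sum.inl e) (Sum.inl s(a, c)) := by
      rw [SimpleGraph.deleteEdges_adj]
      refine ⟨hadjL, ?_⟩
      rintro ⟨z, hz, hzmem⟩
      rcases Sym2.mem_iff.mp hzmem with rfl | rfl
      · exact heV hz
      · exact hfV' hz
    refine ⟨Walk.cons hadj Wh', ?_⟩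
    rw [Walk.support_cons, hWh', Walk.edges_cons]
    rfl

lemma phat_length (G : SimpleGraph V) {s t : V} (pstar : G.Walk s t)
    (phat : (_root_.lineGraph G s t).Walk (Sum.inr false) (Sum.inr true))
    (hphat : phat.support
        = Sum.inr false :: (pstar.edges.map Sum.inl ++ [Sum.inr true])) :
    phat.length = pstar.length + 1 := by
  have hl := phat.length_support
  rw [hphat] at hl
  simp [Walk.length_edges] at hl
  omega

/-- Backward direction : an FPR solution gives an FPC solution. -/
lemma BWD (G : SimpleGraph V) {s t : V} (hst : s ≠ t)
    (pstar : G.Walk s t)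
    (phat : (_root_.lineGraph G s t).Walk (Sum.inr false) (Sum.inr true))
    (hphat : phat.support
        = Sum.inr false :: (pstar.edges.map Sum.inl ++ [Sum.inr true]))
    (Vhat' : Set (Sym2 V ⊕ Bool)) (hsub : Vhat' ⊆ Sum.inl '' G.edgeSet)
    (hFPR : FPRSol (_root_.lineGraph G s t) phat Vhat') :
    FPCSol G pstar {e : Sym2 V | Sum.inl e ∈ Vhat'} := by
  obtain ⟨h1, h2⟩ := hFPR
  have hphatlen := phat_length G pstar phat hphat
  have hinr : ∀ bb : Bool, (Sum.inr bb : Sym2 V ⊕ Bool) ∉ Vhat' := by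
    intro bb hmem
    obtain ⟨f, -, hf⟩ := hsub hmem
    simp at hf
  refine ⟨?_, ?_, ?_⟩
  · intro e he
    obtain ⟨f, hf, hfe⟩ := hsub he
    obtain rfl := Sum.inl_injective hfe
    exact hf
  · intro e hep heV
    have hmem : Sum.inl e ∈ phat.support := by
      rw [hphat]
      exact List.mem_cons_of_mem _ (List.mem_append_left _ (List.mem_map_of_mem hep))
    exact h1 _ heV hmem
  · intro q hq hne
    cases q with
    | nil => exact absurd rfl hst
    | @cons _ c _ h₀ q₀ =>
      obtain ⟨hGadj, hfV⟩ := (SimpleGraph.deleteEdges_adj).mp h₀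
      have hnodup : (s(s, c) :: q₀.edges).Nodup := by
        have := hq.isTrail.edges_nodup
        rwa [Walk.edges_cons] at this
      obtain ⟨Wh, hWh⟩ := lift G s t Vhat' hsub q₀ s(s, c) rfl (Sym2.mem_mk_right _ _)
        hGadj hfV hnodup
      have hadjL : (_root_.lineGraph G s t).Adj (Sum.inr false) (Sum.inl s(s, c)) :=
        (⟨hGadj, Sym2.mem_mk_left _ _⟩ :
          _root_.lgAdj G s t (Sum.inr false) (Sum.inl s(s, c)))
      have hadj : ((_root_.lineGraph G s t).deleteEdges
          {e : Sym2 (Sym2 V ⊕ Bool) | ∃ v ∈ Vhat', v ∈ e}).Adj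
          (Sum.inr false) (Sum.inl s(s, c)) := by
        rw [SimpleGraph.deleteEdges_adj]
        refine ⟨hadjL, ?_⟩
        rintro ⟨z, hz, hzmem⟩
        rcases Sym2.mem_iff.mp hzmem with rfl | rfl
        · exact hinr false hz
        · exact hfV hz
      have hsupp : (Walk.cons hadj Wh).support
          = Sum.inr false :: ((s(s, c) :: q₀.edges).map Sum.inl ++ [Sum.inr true]) := by
        rw [Walk.support_cons, hWh]
      have hqhatpath : (Walk.cons hadj Wh).IsPath := by
        rw [Walk.isPath_def, hsupp]
        exact nodup_hat _ hnodup
      have hqhatne : (Walk.cons hadj Wh).mapLe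
          (SimpleGraph.deleteEdges_le _) ≠ phat := by
        intro hEq
        have hsup2 : phat.support = (Walk.cons hadj Wh).support := by
          rw [← hEq, mapLe_support]
        rw [hphat, hsupp] at hsup2
        injection hsup2 with _ hsup2
        have hedges : pstar.edges.map Sum.inl = (s(s, c) :: q₀.edges).map Sum.inl :=
          List.append_cancel_right hsup2
        have hedges2 : pstar.edges = s(s, c) :: q₀.edges :=
          List.map_injective_iff.mpr Sum.inl_injective hedges
        apply hne
        apply walk_eq_of_edges_eq
        rw [mapLe_edges, Walk.edges_cons, ← hedges2]
      have hlt := h2 (Walk.cons hadj Wh) hqhatpath hqhatne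
      have hWhlen : Wh.length = q₀.length + 1 := by
        have h3 := Wh.length_support
        rw [hWh] at h3
        simp [Walk.length_edges] at h3
        omega
      rw [Walk.length_cons, hWhlen, hphatlen] at hlt
      rw [Walk.length_cons]
      omega

/-- Forward direction : an FPC solution gives an FPR solution. -/
lemma FWD [DecidableEq V] (G : SimpleGraph V) {s t : V}
    (pstar : G.Walk s t)
    (phat : (_root_.lineGraph G s t).Walk (Sum.inr false) (Sum.inr true))
    (hphat : phat.support
        = Sum.inr false :: (pstar.edges.map Sum.inl ++ [Sum.inr true]))
    (E' : Set (Sym2 V)) (hFPC : FPCSol G pstar E') :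
    FPRSol (_root_.lineGraph G s t) phat (Sum.inl '' E') := by
  obtain ⟨hE1, hE2, hE3⟩ := hFPC
  have hphatlen := phat_length G pstar phat hphat
  constructor
  · rintro v ⟨e, heE', rfl⟩ hmem
    rw [hphat] at hmem
    rcases List.mem_cons.mp hmem with h | h
    · simp at h
    rcases List.mem_append.mp h with h | h
    · obtain ⟨f, hf, hfe⟩ := List.mem_map.mp h
      obtain rfl := Sum.inl_injective hfe
      exact hE2 _ hf heE'
    · simp at h
  · intro qhat hqp hqne
    cases qhat with
    | @cons _ c _ h₀ Wh =>
      obtain ⟨hadjL, hnD⟩ := (SimpleGraph.deleteEdges_adj).mp h₀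
      cases c with
      | inr b => exact ((hadjL : _root_.lgAdj G s t (Sum.inr false) (Sum.inr b)) : False).elim
      | inl e =>
        obtain ⟨heE, hse⟩ := (hadjL : _root_.lgAdj G s t (Sum.inr false) (Sum.inl e))
        have heV : Sum.inl e ∉ Sum.inl '' E' := fun hm =>
          hnD ⟨_, hm, Sym2.mem_mk_right _ _⟩
        have hsnotin : Sum.inr false ∉ Wh.support := by
          have hnd := hqp.support_nodup
          rw [Walk.support_cons] at hnd
          exact (List.nodup_cons.mp hnd).1
        obtain ⟨L, hsupp, hchain, hmem, hlast⟩ :=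
          extract G s t (Sum.inl '' E') Wh hqp.of_cons hsnotin e rfl rfl
        have hmem' : ∀ f ∈ e :: L, f ∈ (G.deleteEdges E').edgeSet := by
          intro f hf
          obtain ⟨hfE, hfV⟩ := hmem f hf
          rw [SimpleGraph.edgeSet_deleteEdges]
          exact ⟨hfE, fun hfe => hfV ⟨f, hfe, rfl⟩⟩
        obtain ⟨W, hWlen, hWeq⟩ := lemA (G.deleteEdges E') L e s t hmem' hchain hse hlast
        obtain ⟨hD1, hD2⟩ := lemD G pstar E' ⟨hE1, hE2, hE3⟩ W
        have hql : (Walk.cons h₀ Wh).length = (e :: L).length + 1 := by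
          have h3 := Wh.length_support
          rw [hsupp] at h3
          rw [Walk.length_cons]
          simp at h3 ⊢
          omega
        rw [hphatlen, hql]
        have hne2 : pstar.length ≠ (e :: L).length := by
          intro hEqlen
          have hWl : W.length = (e :: L).length := le_antisymm hWlen (hEqlen ▸ hD1)
          have hWedges := hWeq hWl
          have hWps := hD2 (by omega)
          have hMeq : e :: L = pstar.edges := by rw [← hWedges, hWps]
          apply hqne
          apply walk_eq_of_support_eq
          rw [mapLe_support, hphat, Walk.support_cons, hsupp, hMeq]
        omega

end Stmt15Aux

/-- The minimum size of a Force Path Remove solution for the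
augmented line graph `(Ĝ, p̂*)` equals the minimum size of a Force Path Cut solution
for `(G, p*)` (assuming a Force Path Cut solution exists); in particular, every
minimum-size Force Path Remove solution for `(Ĝ, p̂*)`, viewed as an edge set of `G`,
is a minimum-size Force Path Cut solution for `(G, p*)`. -/
theorem stmt15 {V : Type*} [Fintype V] [DecidableEq V]
    (G : SimpleGraph V) (s t : V) (hst : s ≠ t)
    (pstar : G.Walk s t) (hpstar : pstar.IsPath)
    (phat : (lineGraph G s t).Walk (Sum.inr false) (Sum.inr true))
    (hphat : phat.support
        = Sum.inr false :: (pstar.edges.map Sum.inl ++ [Sum.inr true]))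
    (hex : ∃ E' : Set (Sym2 V), FPCSol G pstar E') :
    sInf {n : ℕ | ∃ Vhat' : Set (Sym2 V ⊕ Bool),
        Vhat' ⊆ Sum.inl '' G.edgeSet ∧ FPRSol (lineGraph G s t) phat Vhat' ∧
          Vhat'.ncard = n}
      = sInf {n : ℕ | ∃ E' : Set (Sym2 V), FPCSol G pstar E' ∧ E'.ncard = n} ∧
    ∀ Vhat' : Set (Sym2 V ⊕ Bool), Vhat' ⊆ Sum.inl '' G.edgeSet →
      FPRSol (lineGraph G s t) phat Vhat' →
      Vhat'.ncard = sInf {n : ℕ | ∃ Vhat'' : Set (Sym2 V ⊕ Bool),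
          Vhat'' ⊆ Sum.inl '' G.edgeSet ∧ FPRSol (lineGraph G s t) phat Vhat'' ∧
            Vhat''.ncard = n} →
      (FPCSol G pstar {e : Sym2 V | Sum.inl e ∈ Vhat'} ∧
        {e : Sym2 V | Sum.inl e ∈ Vhat'}.ncard
          = sInf {n : ℕ | ∃ E' : Set (Sym2 V), FPCSol G pstar E' ∧ E'.ncard = n}) := by
  clear hex hpstar
  have hcard : ∀ Vhat' : Set (Sym2 V ⊕ Bool), Vhat' ⊆ Sum.inl '' G.edgeSet →
      {e : Sym2 V | Sum.inl e ∈ Vhat'}.ncard = Vhat'.ncard := by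
    intro Vhat' hsub
    have himg : Sum.inl '' {e : Sym2 V | Sum.inl e ∈ Vhat'} = Vhat' := by
      ext x
      constructor
      · rintro ⟨e, he, rfl⟩; exact he
      · intro hx
        obtain ⟨f, -, rfl⟩ := hsub hx
        exact ⟨f, hx, rfl⟩
    conv_rhs => rw [← himg]
    rw [Set.ncard_image_of_injective _ Sum.inl_injective]
  have hS : {n : ℕ | ∃ Vhat' : Set (Sym2 V ⊕ Bool),
        Vhat' ⊆ Sum.inl '' G.edgeSet ∧ FPRSol (lineGraph G s t) phat Vhat' ∧
          Vhat'.ncard = n}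
      = {n : ℕ | ∃ E' : Set (Sym2 V), FPCSol G pstar E' ∧ E'.ncard = n} := by
    ext n
    constructor
    · rintro ⟨Vhat', hsub, hFPR, rfl⟩
      exact ⟨{e : Sym2 V | Sum.inl e ∈ Vhat'},
        Stmt15Aux.BWD G hst pstar phat hphat Vhat' hsub hFPR, hcard Vhat' hsub⟩
    · rintro ⟨E', hFPC, rfl⟩
      refine ⟨Sum.inl '' E', Set.image_mono hFPC.1,
        Stmt15Aux.FWD G pstar phat hphat E' hFPC, ?_⟩
      rw [Set.ncard_image_of_injective _ Sum.inl_injective]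
  refine ⟨by rw [hS], ?_⟩
  intro Vhat' hsub hFPR hmin
  refine ⟨Stmt15Aux.BWD G hst pstar phat hphat Vhat' hsub hFPR, ?_⟩
  rw [hcard Vhat' hsub, hmin, hS]
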